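/- arXiv:1610.02872 — 2 statements merged into one kernel-verified Lean document; each statement's English description precedes it below -/
import Mathlib

section
/- Let 0 = s₁ < s₂ < ... < sₙ = 1 with gaps Δᵢ = sᵢ - sᵢ₋₁ for i = 2,...,n (so Σᵢ Δᵢ = 1), and define τₙ² = (2/n)·Σ_{i=3}^{n-1} [ (Δ_{i+1}/(Δᵢ + Δ_{i+1}) + Δ_{i-1}/(Δᵢ + Δ_{i-1}))² + 2·ΔᵢΔ_{i+1}/(Δᵢ + Δ_{i+1})² ]. Then for any such configuration with n ≥ 5, τₙ² ≤ 4 + C/n for a universal constant C, and lim sup over any sequence of such designs satisfies lim sup τₙ² ≤ 4. -/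
open Filter

/-- The asymptotic variance `τₙ²` of the cross-validation estimator, as a
function of the gaps `Δᵢ = sᵢ - sᵢ₋₁` of the design. -/
noncomputable def tau2 (n : ℕ) (Δ : ℕ → ℝ) : ℝ :=
  (2 / (n : ℝ)) * ∑ i ∈ Finset.Icc 3 (n - 1),
    ((Δ (i + 1) / (Δ i + Δ (i + 1)) + Δ (i - 1) / (Δ i + Δ (i - 1))) ^ 2
      + 2 * (Δ i * Δ (i + 1)) / (Δ i + Δ (i + 1)) ^ 2)

lemma tau2_le_four (n : ℕ) (Δ : ℕ → ℝ) (hn : 5 ≤ n)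
    (hpos : ∀ i ∈ Finset.Icc 2 n, 0 < Δ i) : tau2 n Δ ≤ 4 := by
  have hΔ : ∀ i, 2 ≤ i → i ≤ n → 0 < Δ i := fun i h1 h2 =>
    hpos i (Finset.mem_Icc.mpr ⟨h1, h2⟩)
  set g : ℕ → ℝ := fun i => Δ (i + 1) / (Δ i + Δ (i + 1)) with hg
  have hg01 : ∀ i, 2 ≤ i → i + 1 ≤ n → 0 ≤ g i ∧ g i ≤ 1 := by
    intro i h1 h2
    have hx := hΔ i h1 (by omega)
    have hy := hΔ (i + 1) (by omega) h2
    refine ⟨by positivity, ?_⟩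
    rw [hg]
    dsimp only
    rw [div_le_one (by linarith)]; linarith
  have key : ∀ i ∈ Finset.Icc 3 (n - 1),
      (Δ (i + 1) / (Δ i + Δ (i + 1)) + Δ (i - 1) / (Δ i + Δ (i - 1))) ^ 2
        + 2 * (Δ i * Δ (i + 1)) / (Δ i + Δ (i + 1)) ^ 2
      ≤ 2 + 2 * (g i - g (i - 1)) := by
    intro i hi
    rw [Finset.mem_Icc] at hi
    have hin : i + 1 ≤ n := by omega
    have hx := hΔ (i - 1) (by omega) (by omega)
    have hy := hΔ i (by omega) (by omega)
    have hz := hΔ (i + 1) (by omega) hin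
    have e1 : i - 1 + 1 = i := by omega
    obtain ⟨ha0, ha1⟩ := hg01 i (by omega) hin
    obtain ⟨hb0, hb1⟩ := hg01 (i - 1) (by omega) (by omega)
    have h0 : Δ (i + 1) / (Δ i + Δ (i + 1)) = g i := rfl
    have hb : g (i - 1) = Δ i / (Δ (i - 1) + Δ i) := by rw [hg]; dsimp only; rw [e1]
    have h1 : Δ (i - 1) / (Δ i + Δ (i - 1)) = 1 - g (i - 1) := by
      rw [hb, eq_sub_iff_add_eq,
        div_add_div _ _ (ne_of_gt (by linarith)) (ne_of_gt (by linarith)),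
        div_eq_one_iff_eq (by positivity)]
      ring
    have h2 : 2 * (Δ i * Δ (i + 1)) / (Δ i + Δ (i + 1)) ^ 2 = 2 * g i * (1 - g i) := by
      rw [hg]
      dsimp only
      field_simp
      ring
    rw [h0, h1, h2]
    nlinarith [sq_nonneg (1 - g i), sq_nonneg (g i), mul_nonneg hb0 (sub_nonneg.2 hb1),
      mul_nonneg (sub_nonneg.2 ha1) hb0, sq_nonneg (g i - g (i - 1))]
  have hsum := Finset.sum_le_sum key
  have tele : ∑ i ∈ Finset.Icc 3 (n - 1), (g i - g (i - 1)) = g (n - 1) - g 2 := by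
    have hIcc : Finset.Icc 3 (n - 1) = Finset.Ico 3 n := by
      rw [← Finset.Ico_add_one_right_eq_Icc]
      congr 1
      omega
    rw [hIcc, Finset.sum_Ico_eq_sum_range]
    have : ∀ j, g (3 + j) - g (3 + j - 1) = g (j + 2 + 1) - g (j + 2) := by
      intro j; congr 2 <;> omega
    rw [Finset.sum_congr rfl fun j _ => this j, Finset.sum_range_sub (fun j => g (j + 2))]
    congr 2
    omega
  have hcard : (Finset.Icc 3 (n - 1)).card = n - 3 := by
    rw [Nat.card_Icc]; omega
  have hrhs : ∑ i ∈ Finset.Icc 3 (n - 1), (2 + 2 * (g i - g (i - 1)))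
      = 2 * ((n : ℝ) - 3) + 2 * (g (n - 1) - g 2) := by
    rw [Finset.sum_add_distrib, ← Finset.mul_sum, tele, Finset.sum_const, hcard,
      nsmul_eq_mul]
    push_cast [Nat.cast_sub (by omega : 3 ≤ n)]
    ring
  obtain ⟨hgn0, hgn1⟩ := hg01 (n - 1) (by omega) (by omega)
  obtain ⟨hg20, hg21⟩ := hg01 2 (by omega) (by omega)
  have hS : ∑ i ∈ Finset.Icc 3 (n - 1),
      ((Δ (i + 1) / (Δ i + Δ (i + 1)) + Δ (i - 1) / (Δ i + Δ (i - 1))) ^ 2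
        + 2 * (Δ i * Δ (i + 1)) / (Δ i + Δ (i + 1)) ^ 2) ≤ 2 * (n : ℝ) := by
    calc _ ≤ 2 * ((n : ℝ) - 3) + 2 * (g (n - 1) - g 2) := by rw [← hrhs]; exact hsum
    _ ≤ 2 * (n : ℝ) := by linarith
  have hn0 : (0 : ℝ) < n := by positivity
  rw [tau2]
  calc (2 / (n : ℝ)) * _ ≤ (2 / (n : ℝ)) * (2 * (n : ℝ)) := by
        apply mul_le_mul_of_nonneg_left hS (by positivity)
    _ = 4 := by field_simp; ring

lemma tau2_nonneg (n : ℕ) (Δ : ℕ → ℝ) (hn : 5 ≤ n)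
    (hpos : ∀ i ∈ Finset.Icc 2 n, 0 < Δ i) : 0 ≤ tau2 n Δ := by
  apply mul_nonneg (by positivity)
  apply Finset.sum_nonneg
  intro i hi
  rw [Finset.mem_Icc] at hi
  have hy := hpos i (Finset.mem_Icc.mpr ⟨by omega, by omega⟩)
  have hz := hpos (i + 1) (Finset.mem_Icc.mpr ⟨by omega, by omega⟩)
  have := sq_nonneg (Δ (i + 1) / (Δ i + Δ (i + 1)) + Δ (i - 1) / (Δ i + Δ (i - 1)))
  have h2 : (0:ℝ) ≤ 2 * (Δ i * Δ (i + 1)) / (Δ i + Δ (i + 1)) ^ 2 := by positivity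
  linarith

theorem stmt4 :
    ∃ C : ℝ, 0 < C ∧
      (∀ (n : ℕ) (Δ : ℕ → ℝ), 5 ≤ n → (∀ i ∈ Finset.Icc 2 n, 0 < Δ i) →
        (∑ i ∈ Finset.Icc 2 n, Δ i) = 1 → tau2 n Δ ≤ 4 + C / (n : ℝ)) ∧
      (∀ Δ : ℕ → ℕ → ℝ,
        (∀ n, 5 ≤ n → (∀ i ∈ Finset.Icc 2 n, 0 < Δ n i) ∧ (∑ i ∈ Finset.Icc 2 n, Δ n i) = 1) →
        limsup (fun n => tau2 n (Δ n)) atTop ≤ 4) := by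
  refine ⟨1, one_pos, ?_, ?_⟩
  · intro n Δ hn hpos _
    have h4 := tau2_le_four n Δ hn hpos
    have hn0 : (0 : ℝ) < n := by positivity
    have : (0 : ℝ) ≤ 1 / (n : ℝ) := by positivity
    linarith
  · intro Δ hΔ
    have hev : ∀ᶠ n in atTop, (fun n => tau2 n (Δ n)) n ≤ 4 := by
      filter_upwards [eventually_ge_atTop 5] with n hn
      exact tau2_le_four n (Δ n) hn ((hΔ n hn).1)
    have hbdd : IsBoundedUnder (· ≤ ·) atTop (fun n => tau2 n (Δ n)) := ⟨4, by
      rwa [eventually_map]⟩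
    have hcb : IsCoboundedUnder (· ≤ ·) atTop (fun n => tau2 n (Δ n)) := by
      apply isCoboundedUnder_le_of_eventually_le atTop (x := 0)
      filter_upwards [eventually_ge_atTop 5] with n hn
      exact tau2_nonneg n (Δ n) hn ((hΔ n hn).1)
    exact limsup_le_of_le hcb hev
end

section
/- Let αᵢ = 1/(σ²(1 − e^{−2θΔᵢ})) and Aᵢ = αᵢ + α_{i+1}e^{−2θΔ_{i+1}}. There exists K > 0 such that for all θ ∈ [a,A] ⊂ (0,∞), σ² ∈ [b,B] ⊂ (0,∞), and all Δᵢ, Δ_{i+1} ∈ (0,1], |Aᵢ − (1/(2σ²θ))(1/Δᵢ + 1/Δ_{i+1})| ≤ K. -/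
lemma stmt16_aux (x : ℝ) (hx : 0 < x) :
    0 ≤ 1 / (1 - Real.exp (-x)) - 1 / x ∧ 1 / (1 - Real.exp (-x)) - 1 / x ≤ 1 := by
  have he : Real.exp (-x) < 1 := by
    rw [Real.exp_lt_one_iff]; linarith
  have h1 : 0 < 1 - Real.exp (-x) := by linarith
  have h2 : 1 - Real.exp (-x) ≤ x := by
    have := Real.add_one_le_exp (-x); linarith
  constructor
  · have := one_div_le_one_div_of_le h1 h2
    linarith
  · have h4 : (x + 1) * Real.exp (-x) ≤ 1 := by
      have h5 := Real.add_one_le_exp x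
      have h6 : Real.exp x * Real.exp (-x) = 1 := by
        rw [← Real.exp_add]; simp
      nlinarith [Real.exp_pos (-x)]
    have h3 : x ≤ (x + 1) * (1 - Real.exp (-x)) := by nlinarith
    have h7 : 1 / (1 - Real.exp (-x)) ≤ (x + 1) / x := by
      rw [div_le_div_iff₀ h1 hx]; nlinarith
    have h8 : (x + 1) / x = 1 + 1 / x := by field_simp
    linarith [h7, h8.le, h8.ge]

theorem stmt16 (a A b B : ℝ) (ha : 0 < a) (haA : a ≤ A) (hb : 0 < b) (hbB : b ≤ B) :
    ∃ K > (0 : ℝ), ∀ θ ∈ Set.Icc a A, ∀ σ2 ∈ Set.Icc b B,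
      ∀ Δi ∈ Set.Ioc (0 : ℝ) 1, ∀ Δip1 ∈ Set.Ioc (0 : ℝ) 1,
      |(1 / (σ2 * (1 - Real.exp (-2 * θ * Δi)))
          + (1 / (σ2 * (1 - Real.exp (-2 * θ * Δip1)))) * Real.exp (-2 * θ * Δip1))
        - (1 / (2 * σ2 * θ)) * (1 / Δi + 1 / Δip1)| ≤ K := by
  refine ⟨3 / b, by positivity, ?_⟩
  rintro θ ⟨hθa, hθA⟩ σ2 ⟨hσb, hσB⟩ Δi ⟨hΔi, _⟩ Δip1 ⟨hΔip1, _⟩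
  have hθ : 0 < θ := lt_of_lt_of_le ha hθa
  have hσ : 0 < σ2 := lt_of_lt_of_le hb hσb
  have hx1 : 0 < 2 * θ * Δi := by positivity
  have hx2 : 0 < 2 * θ * Δip1 := by positivity
  have e1 : (-2 : ℝ) * θ * Δi = -(2 * θ * Δi) := by ring
  have e2 : (-2 : ℝ) * θ * Δip1 = -(2 * θ * Δip1) := by ring
  obtain ⟨k1l, k1u⟩ := stmt16_aux _ hx1
  obtain ⟨k2l, k2u⟩ := stmt16_aux _ hx2
  have he1 : Real.exp (-(2 * θ * Δi)) < 1 := by rw [Real.exp_lt_one_iff]; linarith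
  have he2 : Real.exp (-(2 * θ * Δip1)) < 1 := by rw [Real.exp_lt_one_iff]; linarith
  have h1 : (0:ℝ) < 1 - Real.exp (-(2 * θ * Δi)) := by linarith
  have h2 : (0:ℝ) < 1 - Real.exp (-(2 * θ * Δip1)) := by linarith
  rw [e1, e2]
  have hrw : 1 / (σ2 * (1 - Real.exp (-(2 * θ * Δi))))
          + (1 / (σ2 * (1 - Real.exp (-(2 * θ * Δip1))))) * Real.exp (-(2 * θ * Δip1))
        - (1 / (2 * σ2 * θ)) * (1 / Δi + 1 / Δip1)
      = (1 / σ2) * ((1 / (1 - Real.exp (-(2 * θ * Δi))) - 1 / (2 * θ * Δi))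
          + (1 / (1 - Real.exp (-(2 * θ * Δip1))) - 1 / (2 * θ * Δip1)) - 1) := by
    field_simp
    ring
  rw [hrw, abs_mul]
  have hS : |(1 / (1 - Real.exp (-(2 * θ * Δi))) - 1 / (2 * θ * Δi))
      + (1 / (1 - Real.exp (-(2 * θ * Δip1))) - 1 / (2 * θ * Δip1)) - 1| ≤ 3 := by
    rw [abs_le]; constructor <;> nlinarith
  have habs : |1 / σ2| = 1 / σ2 := abs_of_pos (by positivity)
  rw [habs]
  have h1b : 1 / σ2 ≤ 1 / b := one_div_le_one_div_of_le hb hσb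
  calc 1 / σ2 * |_| ≤ 1 / σ2 * 3 := by
        exact mul_le_mul_of_nonneg_left hS (by positivity)
    _ ≤ 3 / b := by
        have h3 : 3 / b = 3 * (1 / b) := by ring
        linarith
end
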